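/- arXiv:2602.10077 — 2 statements merged into one kernel-verified Lean document; each statement's English description precedes it below -/
import Mathlib

section
/- Let E be a real normed vector space, let θ > 0, and let G : E → ℝ be convex, continuously Fréchet differentiable, with G(0) = 0. Then the following are equivalent: (i) θ·‖u‖ ≤ G(u) for all u ∈ E; (ii) θ·‖u‖ ≤ (DG(u))(u) for all u ∈ E, where DG(u) denotes the Fréchet derivative of G at u. -/
/-- For `θ > 0` and a convex, continuously Fréchet differentiable
`G : E → ℝ` with `G 0 = 0`, coercivity `θ‖u‖ ≤ G u` for all `u` is equivalent to
`θ‖u‖ ≤ (DG u) u` for all `u`. -/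
theorem coercivity_iff_fderiv_coercivity
    {E : Type*} [NormedAddCommGroup E] [NormedSpace ℝ E]
    (θ : ℝ) (hθ : 0 < θ)
    (G : E → ℝ) (G' : E → (E →L[ℝ] ℝ))
    (hconv : ConvexOn ℝ Set.univ G)
    (hderiv : ∀ u : E, HasFDerivAt G (G' u) u)
    (hcont : Continuous G')
    (h0 : G 0 = 0) :
    (∀ u : E, θ * ‖u‖ ≤ G u) ↔ (∀ u : E, θ * ‖u‖ ≤ G' u u) := by
  have key : ∀ u : E, ∀ t : ℝ, HasDerivAt (fun s : ℝ => G (s • u)) (G' (t • u) u) t := by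
    intro u t
    have h1 : HasDerivAt (fun s : ℝ => s • u) ((1 : ℝ) • u) t :=
      (hasDerivAt_id t).smul_const u
    have := (hderiv (t • u)).comp_hasDerivAt t h1
    simp only [one_smul] at this
    exact this
  have gconv : ∀ u : E, ConvexOn ℝ Set.univ (fun s : ℝ => G (s • u)) := by
    intro u
    have := hconv.comp_affineMap ((LinearMap.toSpanSingleton ℝ E u).toAffineMap)
    exact this
  constructor
  · intro h u
    rcases eq_or_ne u 0 with rfl | hu
    · simp
    have hs := (gconv u).slope_le_of_hasDerivAt (x := 0) (y := 1) trivial trivial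
      one_pos (by simpa using key u 1)
    have hslope : slope (fun s : ℝ => G (s • u)) 0 1 = G u := by
      simp [slope, h0]
    rw [hslope] at hs
    exact le_trans (h u) hs
  · intro h u
    rcases eq_or_ne u 0 with rfl | hu
    · simpa using h0.ge
    have hGcont : Continuous G := continuous_iff_continuousAt.2 fun x => (hderiv x).continuousAt
    have hcontg : ContinuousOn (fun s : ℝ => G (s • u)) (Set.Icc 0 1) :=
      (hGcont.comp (continuous_id.smul continuous_const)).continuousOn
    obtain ⟨c, hc, hceq⟩ := exists_hasDerivAt_eq_slope (fun s : ℝ => G (s • u))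
      (fun t => G' (t • u) u) one_pos hcontg (fun t _ => key u t)
    have hc0 : (0 : ℝ) < c := hc.1
    have hbound := h (c • u)
    have hnorm : ‖c • u‖ = c * ‖u‖ := by
      rw [norm_smul, Real.norm_eq_abs, abs_of_pos hc0]
    have hmap : G' (c • u) (c • u) = c * G' (c • u) u := by
      simp [map_smul]
    rw [hnorm, hmap] at hbound
    have h2 : θ * ‖u‖ ≤ G' (c • u) u := by
      have := (mul_le_mul_iff_right₀ hc0).1 (by linarith : c * (θ * ‖u‖) ≤ c * G' (c • u) u)
      linarith
    have : G' (c • u) u = G u := by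
      rw [hceq]; simp [h0]
    linarith
end

section
/- Let M : ℝ → ℝ be an N-function and let M̄ denote its conjugate. Let N ≥ 1, let G : ℝ^N → ℝ be convex and differentiable with G(0) = 0, and let a ≥ 0, b > 0, c > 0. Suppose φ : ℝ → [0,∞) satisfies M̄(φ(s)) ≤ M(c·s) for all s ∈ ℝ, and suppose that for every ξ = (ξ_1,…,ξ_N) ∈ ℝ^N and every index j, |∂G/∂ξ_j (ξ)| ≤ a + b·Σ_{i=1}^N φ(ξ_i). Then for every ξ ∈ ℝ^N, G(ξ) ≤ (N/c)·M̄(a) + ((1 + 2bN)/c)·Σ_{j=1}^N M(c·ξ_j). -/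
/-- An N-function: continuous, convex, even, positive for positive arguments,
sublinear at `0` and superlinear at `∞`. -/
def IsNFunction (M : ℝ → ℝ) : Prop :=
  Continuous M ∧ ConvexOn ℝ Set.univ M ∧ (∀ t : ℝ, M (-t) = M t) ∧
  (∀ t : ℝ, 0 < t → 0 < M t) ∧
  Filter.Tendsto (fun t => M t / t) (nhdsWithin 0 (Set.Ioi 0)) (nhds 0) ∧
  Filter.Tendsto (fun t => M t / t) Filter.atTop Filter.atTop

/-- The conjugate (Legendre transform) of an N-function:
`M̄ s = sup { |s|·t − M t : t ≥ 0 }`. -/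
noncomputable def conjN (M : ℝ → ℝ) (s : ℝ) : ℝ :=
  sSup ((fun t => |s| * t - M t) '' Set.Ici (0 : ℝ))

lemma conjN_bddAbove (M : ℝ → ℝ) (hM : IsNFunction M) (s : ℝ) :
    BddAbove ((fun t => |s| * t - M t) '' Set.Ici (0 : ℝ)) := by
  obtain ⟨T, hT⟩ := Filter.eventually_atTop.1 (hM.2.2.2.2.2.eventually_ge_atTop (|s| + 1))
  obtain ⟨K, hK⟩ :=
    ((isCompact_Icc.image (((continuous_const.mul continuous_id).sub hM.1) :
      Continuous fun t => |s| * t - M t)) :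
      IsCompact ((fun t => |s| * t - M t) '' Set.Icc 0 (max T 1))).bddAbove
  refine ⟨max K 0, ?_⟩
  rintro x ⟨t, ht, rfl⟩
  by_cases h : t ≤ max T 1
  · exact le_trans (hK ⟨t, ⟨ht, h⟩, rfl⟩) (le_max_left _ _)
  · push_neg at h
    have ht1 : (1 : ℝ) ≤ t := le_of_lt (lt_of_le_of_lt (le_max_right T 1) h)
    have htpos : 0 < t := lt_of_lt_of_le one_pos ht1
    have h2 : |s| + 1 ≤ M t / t := hT t (le_of_lt (lt_of_le_of_lt (le_max_left T 1) h))
    have hMt : (|s| + 1) * t ≤ M t := (le_div_iff₀ htpos).1 h2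
    have : |s| * t - M t ≤ 0 := by nlinarith
    exact le_trans this (le_max_right _ _)

/-- Young's inequality for the conjugate. -/
lemma young_conjN (M : ℝ → ℝ) (hM : IsNFunction M) (s t : ℝ) (hs : 0 ≤ s) (ht : 0 ≤ t) :
    s * t ≤ M t + conjN M s := by
  have h : |s| * t - M t ≤ conjN M s :=
    le_csSup (conjN_bddAbove M hM s) ⟨t, ht, rfl⟩
  rw [abs_of_nonneg hs] at h
  linarith

lemma nfun_abs (M : ℝ → ℝ) (hM : IsNFunction M) (x : ℝ) : M |x| = M x := by
  rcases abs_cases x with ⟨h, _⟩ | ⟨h, _⟩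
  · rw [h]
  · rw [h, hM.2.2.1]

/-- the growth condition on the partial derivatives of a convex
differentiable `G` with `G 0 = 0` implies a growth bound on `G` itself. -/
theorem growth_of_partial_growth
    (M : ℝ → ℝ) (hM : IsNFunction M)
    (N : ℕ) (hN : 1 ≤ N)
    (G : (Fin N → ℝ) → ℝ)
    (hGconv : ConvexOn ℝ Set.univ G)
    (hGdiff : Differentiable ℝ G)
    (hG0 : G 0 = 0)
    (a b c : ℝ) (ha : 0 ≤ a) (hb : 0 < b) (hc : 0 < c)
    (φ : ℝ → ℝ) (hφ_nonneg : ∀ s : ℝ, 0 ≤ φ s)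
    (hφ : ∀ s : ℝ, conjN M (φ s) ≤ M (c * s))
    (hGgrowth : ∀ ξ : Fin N → ℝ, ∀ j : Fin N,
      |fderiv ℝ G ξ (Pi.single j 1)| ≤ a + b * ∑ i : Fin N, φ (ξ i)) :
    ∀ ξ : Fin N → ℝ,
      G ξ ≤ (N / c) * conjN M a + ((1 + 2 * b * N) / c) * ∑ j : Fin N, M (c * ξ j) := by
  intro ξ
  set D := fderiv ℝ G ξ with hD
  set S := ∑ j : Fin N, M (c * ξ j) with hS
  -- Step 1 : G ξ ≤ D ξ
  have hg_conv : ConvexOn ℝ Set.univ (fun τ : ℝ => G (τ • ξ)) := by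
    have := hGconv.comp_affineMap (LinearMap.toSpanSingleton ℝ (Fin N → ℝ) ξ).toAffineMap
    simp [LinearMap.toSpanSingleton, Function.comp] at this
    exact this
  have hg_deriv : HasDerivAt (fun τ : ℝ => G (τ • ξ)) (D ξ) 1 := by
    have h1 : HasDerivAt (fun τ : ℝ => τ • ξ) ξ 1 := by
      simpa using (hasDerivAt_id (1 : ℝ)).smul_const ξ
    have h2 : HasFDerivAt G (fderiv ℝ G ξ) ((1 : ℝ) • ξ) := by
      simpa using (hGdiff ξ).hasFDerivAt
    exact h2.comp_hasDerivAt (1 : ℝ) h1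
  have hGle : G ξ ≤ D ξ := by
    have := hg_conv.slope_le_of_hasDerivAt (Set.mem_univ (0 : ℝ)) (Set.mem_univ 1)
      one_pos hg_deriv
    simpa [slope, hG0] using this
  -- Step 2 : D ξ = ∑ j, ξ j * D (Pi.single j 1)
  have hDξ : D ξ = ∑ j : Fin N, ξ j * D (Pi.single j 1) := by
    conv_lhs => rw [show ξ = ∑ j : Fin N, Pi.single j (ξ j) from (Finset.univ_sum_single ξ).symm]
    rw [map_sum]
    refine Finset.sum_congr rfl fun j _ => ?_
    have hsingle : (Pi.single j (ξ j) : Fin N → ℝ) = ξ j • (Pi.single j 1 : Fin N → ℝ) := by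
      ext i
      by_cases h : i = j
      · subst h; simp
      · simp [Pi.single_apply, h]
    rw [hsingle, map_smul]
    rfl
  -- Step 3 : per-coordinate bound via Young's inequality
  have hMabs : ∀ x : ℝ, M (c * |x|) = M (c * x) := by
    intro x
    rw [show c * |x| = |c * x| by rw [abs_mul, abs_of_pos hc], nfun_abs M hM]
  have key : ∀ j : Fin N, ξ j * D (Pi.single j 1) ≤
      (1 / c) * conjN M a + (b / c) * S + ((1 + b * N) / c) * M (c * ξ j) := by
    intro j
    have h1 : ξ j * D (Pi.single j 1) ≤ |ξ j| * (a + b * ∑ i : Fin N, φ (ξ i)) := by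
      calc ξ j * D (Pi.single j 1) ≤ |ξ j * D (Pi.single j 1)| := le_abs_self _
        _ = |ξ j| * |D (Pi.single j 1)| := abs_mul _ _
        _ ≤ |ξ j| * (a + b * ∑ i : Fin N, φ (ξ i)) :=
            mul_le_mul_of_nonneg_left (hGgrowth ξ j) (abs_nonneg _)
    -- a * |ξ j| bound
    have ha1 : a * (c * |ξ j|) ≤ M (c * ξ j) + conjN M a := by
      have := young_conjN M hM a (c * |ξ j|) ha (by positivity)
      rwa [hMabs] at this
    -- φ terms
    have hφ1 : ∀ i : Fin N, φ (ξ i) * (c * |ξ j|) ≤ M (c * ξ i) + M (c * ξ j) := by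
      intro i
      have := young_conjN M hM (φ (ξ i)) (c * |ξ j|) (hφ_nonneg _) (by positivity)
      rw [hMabs] at this
      linarith [hφ (ξ i)]
    have hφ2 : (∑ i : Fin N, φ (ξ i)) * (c * |ξ j|) ≤ S + N * M (c * ξ j) := by
      have := Finset.sum_le_sum fun i (_ : i ∈ Finset.univ) => hφ1 i
      rw [Finset.sum_add_distrib, Finset.sum_const, Finset.card_univ, Fintype.card_fin] at this
      rw [Finset.sum_mul]
      simpa [nsmul_eq_mul, hS] using this
    have h2 : |ξ j| * (a + b * ∑ i : Fin N, φ (ξ i)) ≤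
        (1 / c) * conjN M a + (b / c) * S + ((1 + b * N) / c) * M (c * ξ j) := by
      rw [← mul_le_mul_iff_right₀ hc]
      have hbφ : b * ((∑ i : Fin N, φ (ξ i)) * (c * |ξ j|)) ≤
          b * (S + N * M (c * ξ j)) := mul_le_mul_of_nonneg_left hφ2 hb.le
      have hexp : c * ((1 / c) * conjN M a + (b / c) * S + ((1 + b * N) / c) * M (c * ξ j))
          = (M (c * ξ j) + conjN M a) + b * (S + (N : ℝ) * M (c * ξ j)) := by
        field_simp; ring
      have heq : c * (|ξ j| * (a + b * ∑ i : Fin N, φ (ξ i)))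
          = a * (c * |ξ j|) + b * ((∑ i : Fin N, φ (ξ i)) * (c * |ξ j|)) := by ring
      rw [hexp, heq]
      linarith
    exact le_trans h1 h2
  -- Step 4 : sum up
  have hsum : ∑ j : Fin N, ((1 / c) * conjN M a + (b / c) * S + ((1 + b * N) / c) * M (c * ξ j))
      = (N / c) * conjN M a + ((1 + 2 * b * N) / c) * S := by
    rw [Finset.sum_add_distrib, Finset.sum_add_distrib, Finset.sum_const, Finset.sum_const,
      ← Finset.mul_sum, Finset.card_univ, Fintype.card_fin, nsmul_eq_mul, nsmul_eq_mul, ← hS]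
    field_simp
    ring
  calc G ξ ≤ D ξ := hGle
    _ = ∑ j : Fin N, ξ j * D (Pi.single j 1) := hDξ
    _ ≤ ∑ j : Fin N, ((1 / c) * conjN M a + (b / c) * S + ((1 + b * N) / c) * M (c * ξ j)) :=
        Finset.sum_le_sum fun j _ => key j
    _ = (N / c) * conjN M a + ((1 + 2 * b * N) / c) * S := hsum
end
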